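/- Let n ≥ 1 be a natural number and let φ be a permutation of Fin n × Fin 2 such that the subgroup of the permutation group generated by φ and σ acts transitively on Fin n × Fin 2. Then there exists a natural number g such that orb(φ) + orb(φ ∘ σ) + 2·g = n + 2. -/

import Mathlib

/-- The number of orbits (cycles, including fixed points) of a permutation `f`
of a finite type `α`: the number of equivalence classes of the relation
`∃ k : ℤ, (f ^ k) x = y`. -/
noncomputable def orb {α : Type*} [Fintype α] (f : Equiv.Perm α) : ℕ :=
  Nat.card (Quotient (Equiv.Perm.SameCycle.setoid f))

/-- The permutation `σ` of `Fin n × Fin 2` given by `σ (i, j) = (i, j + 1)`. -/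
def sigmaPerm (n : ℕ) : Equiv.Perm (Fin n × Fin 2) :=
  Equiv.prodCongr (Equiv.refl (Fin n)) (Equiv.addRight (1 : Fin 2))

set_option linter.unusedSectionVars false
set_option linter.unusedVariables false
set_option linter.deprecated false


open Equiv Equiv.Perm

variable {α : Type*}

/-- The setoid obtained from `s` by additionally identifying `x` and `y`. -/
def mrg (s : Setoid α) (x y : α) : Setoid α where
  r a b := s.r a b ∨ (s.r a x ∧ s.r y b) ∨ (s.r a y ∧ s.r x b)
  iseqv := by
    constructor
    · intro a; exact Or.inl (s.refl a)
    · rintro a b (h | ⟨h1, h2⟩ | ⟨h1, h2⟩)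
      · exact Or.inl (s.symm h)
      · exact Or.inr (Or.inr ⟨s.symm h2, s.symm h1⟩)
      · exact Or.inr (Or.inl ⟨s.symm h2, s.symm h1⟩)
    · rintro a b c (h | ⟨h1, h2⟩ | ⟨h1, h2⟩) (h' | ⟨h1', h2'⟩ | ⟨h1', h2'⟩)
      · exact Or.inl (s.trans h h')
      · exact Or.inr (Or.inl ⟨s.trans h h1', h2'⟩)
      · exact Or.inr (Or.inr ⟨s.trans h h1', h2'⟩)
      · exact Or.inr (Or.inl ⟨h1, s.trans h2 h'⟩)
      · exact Or.inr (Or.inl ⟨h1, h2'⟩)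
      · exact Or.inl (s.trans h1 h2')
      · exact Or.inr (Or.inr ⟨h1, s.trans h2 h'⟩)
      · exact Or.inl (s.trans h1 h2')
      · exact Or.inr (Or.inr ⟨h1, h2'⟩)

theorem mrg_rel_def {s : Setoid α} {x y a b : α} :
    (mrg s x y).r a b ↔ s.r a b ∨ (s.r a x ∧ s.r y b) ∨ (s.r a y ∧ s.r x b) := Iff.rfl

theorem le_mrg (s : Setoid α) (x y : α) : s ≤ mrg s x y := fun _ _ h => Or.inl h

theorem mrg_rel_xy (s : Setoid α) (x y : α) : (mrg s x y).r x y :=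
  Or.inr (Or.inl ⟨s.refl x, s.refl y⟩)

theorem mrg_le {s u : Setoid α} {x y : α} (hsu : s ≤ u) (hxy : u.r x y) :
    mrg s x y ≤ u := by
  rintro a b (h | ⟨h1, h2⟩ | ⟨h1, h2⟩)
  · exact hsu h
  · exact u.trans (hsu h1) (u.trans hxy (hsu h2))
  · exact u.trans (hsu h1) (u.trans (u.symm hxy) (hsu h2))

theorem mrg_mono {s u : Setoid α} (hsu : s ≤ u) (x y : α) : mrg s x y ≤ mrg u x y :=
  mrg_le (le_trans hsu (le_mrg u x y)) (mrg_rel_xy u x y)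

theorem mrg_self {s : Setoid α} {x y : α} (h : s.r x y) : mrg s x y = s :=
  le_antisymm (mrg_le le_rfl h) (le_mrg s x y)

/-- Counting: quotient by a coarser setoid has fewer classes. -/
theorem card_quot_le_of_le [Finite α] {s t : Setoid α} (h : s ≤ t) :
    Nat.card (Quotient t) ≤ Nat.card (Quotient s) :=
  Nat.card_le_card_of_surjective (fun q => Quotient.map' id (fun _ _ hab => h hab) q)
    (fun q => Quotient.inductionOn q fun a => ⟨Quotient.mk'' a, rfl⟩)

theorem card_quot_le [Finite α] (s : Setoid α) : Nat.card (Quotient s) ≤ Nat.card α :=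
  Nat.card_le_card_of_surjective _ Quotient.mk''_surjective

theorem card_quot_mrg [Finite α] {s : Setoid α} {x y : α} (h : ¬ s.r x y) :
    Nat.card (Quotient s) = Nat.card (Quotient (mrg s x y)) + 1 := by
  classical
  rw [← Finite.card_option]
  have wd : ∀ a b, s.r a b →
      (if s.r a y then (none : Option (Quotient (mrg s x y)))
        else some (Quotient.mk (mrg s x y) a)) =
      (if s.r b y then none else some (Quotient.mk (mrg s x y) b)) := by
    intro a b hab
    split_ifs with h1 h2 h2
    · rfl
    · exact absurd (s.trans (s.symm hab) h1) h2
    · exact absurd (s.trans hab h2) h1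
    · exact congrArg some (Quotient.sound (Or.inl hab))
  apply Nat.card_eq_of_bijective (Quotient.lift _ wd)
  constructor
  · intro p q
    induction p using Quotient.inductionOn with | h a =>
    induction q using Quotient.inductionOn with | h b =>
    simp only [Quotient.lift_mk]
    split_ifs with h1 h2 h2
    · intro _; exact Quotient.sound (s.trans h1 (s.symm h2))
    · intro hc; exact hc.elim
    · intro hc; exact hc.elim
    · intro hc
      rcases Quotient.exact (Option.some_injective _ hc) with h' | ⟨ha, hb⟩ | ⟨ha, hb⟩
      · exact Quotient.sound h'
      · exact absurd (s.symm hb) h2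
      · exact absurd ha h1
  · intro o
    match o with
    | none =>
      refine ⟨Quotient.mk s y, ?_⟩
      simp only [Quotient.lift_mk]
      rw [if_pos (show s.r y y from s.refl y)]
    | some q =>
      induction q using Quotient.inductionOn with | h b =>
      by_cases hby : s.r b y
      · refine ⟨Quotient.mk s x, ?_⟩
        simp only [Quotient.lift_mk]
        rw [if_neg (show ¬s.r x y from h)]
        exact congrArg some (Quotient.sound (Or.inr (Or.inl ⟨s.refl x, s.symm hby⟩)))
      · refine ⟨Quotient.mk s b, ?_⟩
        simp only [Quotient.lift_mk]
        rw [if_neg (show ¬s.r b y from hby)]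

section Perm

variable [DecidableEq α] {f : Equiv.Perm α} {x y : α}

theorem sameCycle_le_of_step {u : Setoid α} (f : Equiv.Perm α)
    (h : ∀ a, u.r (f a) a) : Equiv.Perm.SameCycle.setoid f ≤ u := by
  have key : ∀ (k : ℤ) (a : α), u.r a ((f ^ k) a) := by
    intro k
    induction k using Int.induction_on with
    | zero => intro a; simpa using u.refl a
    | succ k ih =>
      intro a
      have heq : (f ^ ((k : ℤ) + 1)) a = (f ^ (k : ℤ)) (f a) := by
        rw [zpow_add_one, Equiv.Perm.mul_apply]
      rw [heq]
      exact u.trans (u.symm (h a)) (ih (f a))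
    | pred k ih =>
      intro a
      have heq : (f ^ (-(k : ℤ) - 1)) a = (f ^ (-(k : ℤ))) (f⁻¹ a) := by
        rw [zpow_sub_one, Equiv.Perm.mul_apply]
      rw [heq]
      refine u.trans ?_ (ih (f⁻¹ a))
      have := h (f⁻¹ a)
      rw [← Equiv.Perm.mul_apply, mul_inv_cancel, Equiv.Perm.one_apply] at this
      exact this
  rintro a b ⟨k, hk⟩
  exact u.trans (key k a) (hk ▸ u.refl b)

theorem P1 (f : Equiv.Perm α) (x y : α) :
    Equiv.Perm.SameCycle.setoid (f * Equiv.swap x y) ≤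
      mrg (Equiv.Perm.SameCycle.setoid f) x y := by
  apply sameCycle_le_of_step
  intro a
  rcases eq_or_ne a x with rfl | hax
  · have : (f * Equiv.swap a y) a = f y := by simp
    rw [this]
    exact Or.inr (Or.inr ⟨show Equiv.Perm.SameCycle f (f y) y from ⟨-1, by simp⟩,
      Equiv.Perm.SameCycle.refl f a⟩)
  rcases eq_or_ne a y with rfl | hay
  · have : (f * Equiv.swap x a) a = f x := by simp
    rw [this]
    exact Or.inr (Or.inl ⟨show Equiv.Perm.SameCycle f (f x) x from ⟨-1, by simp⟩,
      Equiv.Perm.SameCycle.refl f a⟩)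
  · have : (f * Equiv.swap x y) a = f a := by
      simp [Equiv.swap_apply_of_ne_of_ne hax hay]
    rw [this]
    exact Or.inl ⟨-1, by simp⟩

theorem hard [Fintype α] (hxy : x ≠ y) (h : ¬ f.SameCycle x y) :
    (f * Equiv.swap x y).SameCycle x y := by
  set g := f * Equiv.swap x y with hg
  have hper : Function.IsPeriodicPt f (orderOf f) y := by
    rw [Function.IsPeriodicPt, Function.IsFixedPt, Equiv.Perm.iterate_eq_pow,
      pow_orderOf_eq_one]
    rfl
  set q := Function.minimalPeriod f y with hq
  have hqpos : 0 < q := hper.minimalPeriod_pos (orderOf_pos f)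
  have claim : ∀ k, 1 ≤ k → k ≤ q → (g ^ k) x = (⇑f)^[k] y := by
    intro k hk
    induction k, hk using Nat.le_induction with
    | base =>
      intro _
      simp [hg, Equiv.Perm.mul_apply, Equiv.swap_apply_left]
    | succ k hk ih =>
      intro hkq
      have hky : (⇑f)^[k] y ≠ y := by
        intro he
        have : q ≤ k := Function.IsPeriodicPt.minimalPeriod_le (by omega) he
        omega
      have hkx : (⇑f)^[k] y ≠ x := by
        intro he
        apply h
        exact Equiv.Perm.SameCycle.symm ⟨(k : ℤ), by
          rw [zpow_natCast, ← Equiv.Perm.iterate_eq_pow, he]⟩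
      rw [pow_succ', Equiv.Perm.mul_apply, ih (by omega),
        Function.iterate_succ_apply', hg]
      have : Equiv.swap x y ((⇑f)^[k] y) = (⇑f)^[k] y :=
        Equiv.swap_apply_of_ne_of_ne hkx hky
      rw [Equiv.Perm.mul_apply, this]
  refine ⟨(q : ℤ), ?_⟩
  rw [zpow_natCast, claim q hqpos le_rfl, Function.iterate_minimalPeriod]


theorem sameCycle_setoid_mul_swap [Fintype α] (h : ¬ f.SameCycle x y) :
    Equiv.Perm.SameCycle.setoid (f * Equiv.swap x y) =
      mrg (Equiv.Perm.SameCycle.setoid f) x y := by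
  have hxy : x ≠ y := fun he => h (he ▸ Equiv.Perm.SameCycle.refl f x)
  set g := f * Equiv.swap x y with hg
  have hxyg : g.SameCycle x y := hard hxy h
  refine le_antisymm (P1 f x y) (mrg_le ?_ hxyg)
  apply sameCycle_le_of_step
  intro a
  rcases eq_or_ne a x with rfl | hax
  · have : f a = g y := by simp [hg, Equiv.Perm.mul_apply]
    rw [this]
    exact (show g.SameCycle (g y) y from ⟨-1, by simp⟩).trans hxyg.symm
  rcases eq_or_ne a y with rfl | hay
  · have : f a = g x := by simp [hg, Equiv.Perm.mul_apply]
    rw [this]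
    exact (show g.SameCycle (g x) x from ⟨-1, by simp⟩).trans hxyg
  · have : f a = g a := by simp [hg, Equiv.Perm.mul_apply,
      Equiv.swap_apply_of_ne_of_ne hax hay]
    rw [this]
    exact ⟨-1, by simp⟩

theorem orb_mul_swap_of_not_sameCycle [Fintype α] (h : ¬ f.SameCycle x y) :
    orb f = orb (f * Equiv.swap x y) + 1 := by
  unfold orb
  rw [sameCycle_setoid_mul_swap h]
  exact card_quot_mrg h

theorem orb_le_orb_mul_swap [Fintype α] (f : Equiv.Perm α) (x y : α) :
    orb f ≤ orb (f * Equiv.swap x y) + 1 := by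
  rcases eq_or_ne x y with rfl | hxy
  · simp [Equiv.swap_self, Equiv.Perm.mul_refl]
  by_cases h : f.SameCycle x y
  · have h1 : Equiv.Perm.SameCycle.setoid (f * Equiv.swap x y) ≤
        Equiv.Perm.SameCycle.setoid f := by
      rw [← mrg_self (show (Equiv.Perm.SameCycle.setoid f).r x y from h)]
      exact P1 f x y
    exact le_trans (card_quot_le_of_le h1) (Nat.le_succ _)
  · exact le_of_eq (orb_mul_swap_of_not_sameCycle h)

theorem not_sameCycle_of_fixed {g : Equiv.Perm α} (hfix : g y = y) (hxy : x ≠ y) :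
    ¬ g.SameCycle x y := by
  intro hc
  rcases hc.symm with ⟨k, hk⟩
  rw [Equiv.Perm.zpow_apply_eq_self_of_apply_eq_self hfix] at hk
  exact hxy hk.symm

theorem orb_one [Fintype α] : orb (1 : Equiv.Perm α) = Nat.card α := by
  unfold orb
  symm
  apply Nat.card_eq_of_bijective (Quotient.mk _)
  constructor
  · intro a b hab
    exact Equiv.Perm.sameCycle_one.mp (Quotient.exact hab)
  · exact Quotient.mk''_surjective

theorem fact_swap_list [Fintype α] :
    ∀ (k : ℕ) (f : Equiv.Perm α), orb f + k = Nat.card α →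
      ∃ l : List (α × α), (l.map (fun p => Equiv.swap p.1 p.2)).prod = f ∧
        l.length = k ∧ ∀ p ∈ l, p.1 ≠ p.2 := by
  have key : ∀ (f : Equiv.Perm α) (a : α), f a ≠ a →
      orb (f * Equiv.swap a (f a)) = orb f + 1 := by
    intro f a ha
    set g := f * Equiv.swap a (f a) with hgdef
    have hfix : g (f a) = f a := by
      simp [hgdef, Equiv.Perm.mul_apply, Equiv.swap_apply_right]
    have hns : ¬ g.SameCycle a (f a) := not_sameCycle_of_fixed hfix (Ne.symm ha)
    have hgs : g * Equiv.swap a (f a) = f := by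
      rw [hgdef, mul_assoc, Equiv.swap_mul_self, mul_one]
    have := orb_mul_swap_of_not_sameCycle hns
    rw [hgs] at this
    omega
  intro k
  induction k with
  | zero =>
    intro f hf
    have hf1 : f = 1 := by
      by_contra hne
      obtain ⟨a, ha⟩ : ∃ a, f a ≠ a := by
        by_contra hall
        push_neg at hall
        exact hne (Equiv.ext hall)
      have h1 := key f a ha
      have h2 := card_quot_le (Equiv.Perm.SameCycle.setoid (f * Equiv.swap a (f a)))
      unfold orb at h1 hf
      omega
    exact ⟨[], by simp [hf1], rfl, by simp⟩
  | succ k ih =>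
    intro f hf
    have hne : f ≠ 1 := by
      intro he
      rw [he, orb_one] at hf
      omega
    obtain ⟨a, ha⟩ : ∃ a, f a ≠ a := by
      by_contra hall
      push_neg at hall
      exact hne (Equiv.ext hall)
    obtain ⟨l', hprod, hlen, hne'⟩ := ih (f * Equiv.swap a (f a)) (by
      have := key f a ha; omega)
    refine ⟨l' ++ [(a, f a)], ?_, by simp [hlen], ?_⟩
    · rw [List.map_append, List.prod_append, hprod]
      simp [mul_assoc]
    · intro p hp
      rcases List.mem_append.mp hp with h | h
      · exact hne' p h
      · simp at h
        subst h
        exact Ne.symm ha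

def El (l : List (α × α)) : Setoid α := l.foldl (fun s p => mrg s p.1 p.2) (⊥ : Setoid α)

theorem El_concat (l : List (α × α)) (p : α × α) :
    El (l ++ [p]) = mrg (El l) p.1 p.2 := by
  simp [El, List.foldl_append]

theorem card_quot_bot [Fintype α] : Nat.card (Quotient (⊥ : Setoid α)) = Nat.card α := by
  symm
  apply Nat.card_eq_of_bijective (Quotient.mk _)
  constructor
  · intro a b hab
    exact Quotient.exact hab
  · exact Quotient.mk''_surjective

theorem sameCycle_le_El [Fintype α] (l : List (α × α)) :
    Equiv.Perm.SameCycle.setoid ((l.map fun p => Equiv.swap p.1 p.2).prod) ≤ El l := by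
  induction l using List.reverseRecOn with
  | nil =>
    intro a b hab
    exact Equiv.Perm.sameCycle_one.mp hab
  | append_singleton l p ih =>
    rw [El_concat, List.map_append, List.prod_append]
    simp only [List.map_cons, List.map_nil, List.prod_cons, List.prod_nil, mul_one]
    exact le_trans (P1 _ p.1 p.2) (mrg_mono ih p.1 p.2)

theorem mem_El (l : List (α × α)) {p : α × α} : p ∈ l → (El l).r p.1 p.2 := by
  induction l using List.reverseRecOn with
  | nil => intro hp; simp at hp
  | append_singleton l q ih =>
    intro hp
    rw [El_concat]
    rcases List.mem_append.mp hp with h | h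
    · exact le_mrg (El l) q.1 q.2 (ih h)
    · simp at h
      subst h
      exact mrg_rel_xy (El l) p.1 p.2

theorem key_ineq [Fintype α] (l : List (α × α)) :
    orb ((l.map fun p => Equiv.swap p.1 p.2).prod) + Nat.card α ≤
      l.length + 2 * Nat.card (Quotient (El l)) := by
  induction l using List.reverseRecOn with
  | nil =>
    simp only [List.map_nil, List.prod_nil, List.length_nil, zero_add]
    rw [orb_one, show El ([] : List (α × α)) = ⊥ from rfl, card_quot_bot]
    omega
  | append_singleton l p ih =>
    rw [El_concat, List.map_append, List.prod_append, List.length_append]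
    simp only [List.map_cons, List.map_nil, List.prod_cons, List.prod_nil, mul_one,
      List.length_cons, List.length_nil]
    set f' := (l.map fun p => Equiv.swap p.1 p.2).prod with hf'
    by_cases hr : (El l).r p.1 p.2
    · rw [mrg_self hr]
      have := orb_le_orb_mul_swap (f' * Equiv.swap p.1 p.2) p.1 p.2
      rw [mul_assoc, Equiv.swap_mul_self, mul_one] at this
      omega
    · have hnsc : ¬ f'.SameCycle p.1 p.2 := fun hc => hr (sameCycle_le_El l hc)
      have h1 := orb_mul_swap_of_not_sameCycle hnsc
      have h2 := card_quot_mrg hr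
      omega


theorem El_rel_of_closure [Fintype α] (l : List (α × α)) (g : Equiv.Perm α)
    (hg : g ∈ Subgroup.closure {h : Equiv.Perm α | ∃ p ∈ l, h = Equiv.swap p.1 p.2}) :
    ∀ a, (El l).r (g a) a := by
  refine Subgroup.closure_induction (fun x hx => ?_) (fun a => ?_)
    (fun x y _ _ ihx ihy a => ?_) (fun x _ ihx a => ?_) hg
  · obtain ⟨p, hp, rfl⟩ := hx
    intro a
    rcases eq_or_ne a p.1 with rfl | h1
    · rw [Equiv.swap_apply_left]
      exact (El l).iseqv.symm (mem_El l hp)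
    rcases eq_or_ne a p.2 with rfl | h2
    · rw [Equiv.swap_apply_right]
      exact mem_El l hp
    · rw [Equiv.swap_apply_of_ne_of_ne h1 h2]
  · exact (El l).refl a
  · exact (El l).trans (ihx (y a)) (ihy a)
  · have := ihx (x⁻¹ a)
    rw [← Equiv.Perm.mul_apply, mul_inv_cancel, Equiv.Perm.one_apply] at this
    exact (El l).iseqv.symm this

theorem card_quot_El_le_one [Fintype α] (l : List (α × α))
    (htrans : MulAction.IsPretransitive
      (Subgroup.closure {h : Equiv.Perm α | ∃ p ∈ l, h = Equiv.swap p.1 p.2}) α) :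
    Nat.card (Quotient (El l)) ≤ 1 := by
  have hsub : ∀ p q : Quotient (El l), p = q := by
    intro p q
    induction p using Quotient.inductionOn with | h a =>
    induction q using Quotient.inductionOn with | h b =>
    obtain ⟨⟨g, hg⟩, hgab⟩ := MulAction.exists_smul_eq
      (Subgroup.closure {h : Equiv.Perm α | ∃ p ∈ l, h = Equiv.swap p.1 p.2}) b a
    apply Quotient.sound
    have := El_rel_of_closure l g hg b
    rwa [show g b = a from hgab] at this
  calc Nat.card (Quotient (El l)) ≤ Nat.card Unit :=
        Nat.card_le_card_of_injective (fun _ => (() : Unit))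
          (fun p q _ => hsub p q)
    _ = 1 := Nat.card_unique

theorem pretrans_mono {H K : Subgroup (Equiv.Perm α)} (hHK : H ≤ K)
    (h : MulAction.IsPretransitive H α) : MulAction.IsPretransitive K α := by
  constructor
  intro a b
  obtain ⟨⟨g, hg⟩, hgab⟩ := MulAction.exists_smul_eq H a b
  exact ⟨⟨g, hHK hg⟩, hgab⟩

end Perm

theorem swap_list_prod_apply {n : ℕ} (L : List (Fin n)) (hL : L.Nodup) (a : Fin n × Fin 2) :
    ((L.map fun i => Equiv.swap ((i, 0) : Fin n × Fin 2) (i, 1)).prod) a =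
      if a.1 ∈ L then (a.1, a.2 + 1) else a := by
  induction L with
  | nil => simp
  | cons i L ih =>
    obtain ⟨hiL, hLnd⟩ := List.nodup_cons.mp hL
    rw [List.map_cons, List.prod_cons, Equiv.Perm.mul_apply, ih hLnd]
    by_cases hm : a.1 ∈ L
    · rw [if_pos hm]
      have hne : a.1 ≠ i := fun h => hiL (h ▸ hm)
      rw [Equiv.swap_apply_of_ne_of_ne
        (show ((a.1, a.2 + 1) : Fin n × Fin 2) ≠ (i, 0) from
          fun h => hne (congrArg Prod.fst h))
        (show ((a.1, a.2 + 1) : Fin n × Fin 2) ≠ (i, 1) from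
          fun h => hne (congrArg Prod.fst h))]
      rw [if_pos (List.mem_cons_of_mem i hm)]
    · rw [if_neg hm]
      rcases eq_or_ne a.1 i with hai | hai
      · have h2 : a.2 = 0 ∨ a.2 = 1 := by
          have := a.2.isLt
          rcases (by omega : (a.2 : ℕ) = 0 ∨ (a.2 : ℕ) = 1) with h | h
          · exact Or.inl (Fin.ext h)
          · exact Or.inr (Fin.ext h)
        have ha : a = (i, a.2) := by rw [← hai]
        rcases h2 with h2 | h2
        · rw [ha, h2, Equiv.swap_apply_left, if_pos (List.mem_cons_self)]
          simp [hai]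
        · rw [ha, h2, Equiv.swap_apply_right, if_pos (List.mem_cons_self)]
          simp [hai]
      · rw [Equiv.swap_apply_of_ne_of_ne
          (fun h => hai (congrArg Prod.fst h)) (fun h => hai (congrArg Prod.fst h))]
        rw [if_neg (by simp [hai, hm])]

theorem sigma_prod (n : ℕ) :
    (((List.finRange n).map fun i =>
      ((( i, 0) : Fin n × Fin 2), ((i, 1) : Fin n × Fin 2))).map
        (fun p => Equiv.swap p.1 p.2)).prod = sigmaPerm n := by
  apply Equiv.ext
  intro a
  rw [List.map_map]
  have : ((fun p : (Fin n × Fin 2) × (Fin n × Fin 2) => Equiv.swap p.1 p.2) ∘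
      fun i : Fin n => (((i, 0) : Fin n × Fin 2), ((i, 1) : Fin n × Fin 2))) =
      fun i : Fin n => Equiv.swap ((i, 0) : Fin n × Fin 2) (i, 1) := rfl
  rw [this, swap_list_prod_apply _ (List.nodup_finRange n) a,
    if_pos (List.mem_finRange a.1)]
  rfl

theorem even_add_of_neg_one_pow_eq {a b : ℕ} (h : ((-1 : ℤˣ)) ^ a = (-1 : ℤˣ) ^ b) :
    Even (a + b) := by
  rcases Nat.even_or_odd a with ha | ha <;> rcases Nat.even_or_odd b with hb | hb
  · exact (ha.add hb)
  · rw [Even.neg_one_pow ha, Odd.neg_one_pow hb] at h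
    exact absurd h (by decide)
  · rw [Odd.neg_one_pow ha, Even.neg_one_pow hb] at h
    exact absurd h (by decide)
  · exact (Nat.even_add.mpr (by simp [Nat.not_even_iff_odd.mpr ha, Nat.not_even_iff_odd.mpr hb]))

theorem orb_add_orb_genus (n : ℕ) (hn : 1 ≤ n)
    (φ : Equiv.Perm (Fin n × Fin 2))
    (htrans : MulAction.IsPretransitive
      (Subgroup.closure ({φ, sigmaPerm n} : Set (Equiv.Perm (Fin n × Fin 2))))
      (Fin n × Fin 2)) :
    ∃ g : ℕ, orb φ + orb (φ * sigmaPerm n) + 2 * g = n + 2 := by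
  have hcard : Nat.card (Fin n × Fin 2) = 2 * n := by
    simp [Nat.card_eq_fintype_card, mul_comm]
  -- factorizations
  have hφle : orb φ ≤ Nat.card (Fin n × Fin 2) := card_quot_le _
  have hψle : orb (φ * sigmaPerm n) ≤ Nat.card (Fin n × Fin 2) := card_quot_le _
  obtain ⟨Lφ, hφprod, hφlen, hφne⟩ :=
    fact_swap_list (Nat.card (Fin n × Fin 2) - orb φ) φ (by omega)
  obtain ⟨Lψ, hψprod, hψlen, hψne⟩ :=
    fact_swap_list (Nat.card (Fin n × Fin 2) - orb (φ * sigmaPerm n)) (φ * sigmaPerm n)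
      (by omega)
  set Lσ : List ((Fin n × Fin 2) × (Fin n × Fin 2)) :=
    (List.finRange n).map fun i => (((i, 0) : Fin n × Fin 2), ((i, 1) : Fin n × Fin 2))
    with hLσ
  have hσprod : (Lσ.map (fun p => Equiv.swap p.1 p.2)).prod = sigmaPerm n := sigma_prod n
  have hσlen : Lσ.length = n := by simp [hLσ]
  have hσne : ∀ p ∈ Lσ, p.1 ≠ p.2 := by
    intro p hp
    rw [hLσ, List.mem_map] at hp
    obtain ⟨i, -, rfl⟩ := hp
    intro h
    have h2 : (0 : Fin 2) = 1 := congrArg Prod.snd h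
    exact absurd h2 (by decide)
  set l := Lφ ++ Lσ with hl
  have hlprod : (l.map (fun p => Equiv.swap p.1 p.2)).prod = φ * sigmaPerm n := by
    rw [hl, List.map_append, List.prod_append, hφprod, hσprod]
  -- transitivity transfer
  have hle : Subgroup.closure ({φ, sigmaPerm n} : Set (Equiv.Perm (Fin n × Fin 2))) ≤
      Subgroup.closure {h : Equiv.Perm (Fin n × Fin 2) | ∃ p ∈ l, h = Equiv.swap p.1 p.2} := by
    rw [Subgroup.closure_le]
    rintro x (rfl | rfl)
    · rw [← hφprod]
      apply list_prod_mem
      intro g hg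
      obtain ⟨p, hp, rfl⟩ := List.mem_map.mp hg
      exact Subgroup.subset_closure ⟨p, List.mem_append_left _ hp, rfl⟩
    · rw [← hσprod]
      apply list_prod_mem
      intro g hg
      obtain ⟨p, hp, rfl⟩ := List.mem_map.mp hg
      exact Subgroup.subset_closure ⟨p, List.mem_append_right _ hp, rfl⟩
  have htrans' := pretrans_mono hle htrans
  have hQ := card_quot_El_le_one l htrans'
  have hkey := key_ineq l
  rw [hlprod] at hkey
  have hllen : l.length = Lφ.length + n := by simp [hl, hσlen]
  -- sign computation
  have hsφ : Equiv.Perm.sign φ = (-1 : ℤˣ) ^ Lφ.length := by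
    rw [← hφprod, Equiv.Perm.sign_prod_list_swap, List.length_map]
    intro g hg
    obtain ⟨p, hp, rfl⟩ := List.mem_map.mp hg
    exact ⟨p.1, p.2, hφne p hp, rfl⟩
  have hsσ : Equiv.Perm.sign (sigmaPerm n) = (-1 : ℤˣ) ^ n := by
    rw [← hσprod, Equiv.Perm.sign_prod_list_swap, List.length_map, hσlen]
    intro g hg
    obtain ⟨p, hp, rfl⟩ := List.mem_map.mp hg
    exact ⟨p.1, p.2, hσne p hp, rfl⟩
  have hsψ : Equiv.Perm.sign (φ * sigmaPerm n) = (-1 : ℤˣ) ^ Lψ.length := by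
    rw [← hψprod, Equiv.Perm.sign_prod_list_swap, List.length_map]
    intro g hg
    obtain ⟨p, hp, rfl⟩ := List.mem_map.mp hg
    exact ⟨p.1, p.2, hψne p hp, rfl⟩
  have hsmul : Equiv.Perm.sign (φ * sigmaPerm n) =
      Equiv.Perm.sign φ * Equiv.Perm.sign (sigmaPerm n) := by rw [map_mul]
  rw [hsψ, hsφ, hsσ, ← pow_add] at hsmul
  have hpar := even_add_of_neg_one_pow_eq hsmul
  obtain ⟨r, hr⟩ := hpar
  refine ⟨(n + 2 - (orb φ + orb (φ * sigmaPerm n))) / 2, ?_⟩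
  omega
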